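/- Let X and Y be real Banach spaces and S : X → Y a bounded linear operator. Then for every n ≥ 1, ∏_{k=1}^n c_k(S) ≤ n^n · ∏_{k=1}^n h_k(S), where c_k are the Gelfand numbers and h_k the Hilbert numbers. -/

import Mathlib

/-- The real Hilbert sequence space ℓ₂ = lp(ℕ, 2). -/
abbrev Ell2 : Type := lp (fun _ : ℕ => ℝ) 2

/-- Approximation numbers. -/
noncomputable def approxNumber {X Y : Type*} [NormedAddCommGroup X] [NormedSpace ℝ X]
    [NormedAddCommGroup Y] [NormedSpace ℝ Y] (n : ℕ) (S : X →L[ℝ] Y) : ℝ :=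
  sInf {r : ℝ | ∃ L : X →L[ℝ] Y, LinearMap.rank (L : X →ₗ[ℝ] Y) < n ∧ r = ‖S - L‖}

/-- Gelfand numbers. -/
noncomputable def gelfandNumber {X Y : Type*} [NormedAddCommGroup X] [NormedSpace ℝ X]
    [NormedAddCommGroup Y] [NormedSpace ℝ Y] (n : ℕ) (S : X →L[ℝ] Y) : ℝ :=
  sInf {r : ℝ | ∃ M : Submodule ℝ X, IsClosed (M : Set X) ∧ Module.rank ℝ (X ⧸ M) < n ∧
    r = ‖S.comp M.subtypeL‖}

/-- The canonical quotient map onto `Y ⧸ N`, as a continuous linear map (with respect to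
the quotient (semi)norm). -/
noncomputable def quotientCLM {Y : Type*} [NormedAddCommGroup Y] [NormedSpace ℝ Y]
    (N : Submodule ℝ Y) : Y →L[ℝ] Y ⧸ N :=
  LinearMap.mkContinuous N.mkQ 1 fun y => by
    simpa using Submodule.Quotient.norm_mk_le N y

/-- Kolmogorov numbers. -/
noncomputable def kolmogorovNumber {X Y : Type*} [NormedAddCommGroup X] [NormedSpace ℝ X]
    [NormedAddCommGroup Y] [NormedSpace ℝ Y] (n : ℕ) (S : X →L[ℝ] Y) : ℝ :=
  sInf {r : ℝ | ∃ N : Submodule ℝ Y, Module.rank ℝ N < n ∧ r = ‖(quotientCLM N).comp S‖}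

/-- Hilbert numbers. -/
noncomputable def hilbertNumber {X Y : Type*} [NormedAddCommGroup X] [NormedSpace ℝ X]
    [NormedAddCommGroup Y] [NormedSpace ℝ Y] (n : ℕ) (S : X →L[ℝ] Y) : ℝ :=
  sSup {r : ℝ | ∃ (A : Ell2 →L[ℝ] X) (B : Y →L[ℝ] Ell2), A ≠ 0 ∧ B ≠ 0 ∧
    r = approxNumber n (B.comp (S.comp A)) / (‖B‖ * ‖A‖)}


set_option maxHeartbeats 1000000
set_option synthInstance.maxHeartbeats 200000

section Basic
variable {X Y Z W : Type*} [NormedAddCommGroup X] [NormedSpace ℝ X]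
  [NormedAddCommGroup Y] [NormedSpace ℝ Y]
  [NormedAddCommGroup Z] [NormedSpace ℝ Z] [NormedAddCommGroup W] [NormedSpace ℝ W]

lemma approxSet_nonneg {n : ℕ} {S : X →L[ℝ] Y} :
    ∀ r ∈ {r : ℝ | ∃ L : X →L[ℝ] Y, LinearMap.rank (L : X →ₗ[ℝ] Y) < n ∧ r = ‖S - L‖}, 0 ≤ r := by
  rintro r ⟨L, -, rfl⟩; exact norm_nonneg _

lemma approxNumber_nonneg (n : ℕ) (S : X →L[ℝ] Y) : 0 ≤ approxNumber n S :=
  Real.sInf_nonneg approxSet_nonneg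

lemma approxSet_mem_zero {n : ℕ} (hn : 1 ≤ n) (S : X →L[ℝ] Y) :
    ‖S‖ ∈ {r : ℝ | ∃ L : X →L[ℝ] Y, LinearMap.rank (L : X →ₗ[ℝ] Y) < n ∧ r = ‖S - L‖} := by
  refine ⟨0, ?_, by simp⟩
  have : LinearMap.rank ((0 : X →L[ℝ] Y) : X →ₗ[ℝ] Y) = 0 := by
    simp [LinearMap.rank]
  rw [this]
  exact_mod_cast Nat.cast_pos.mpr hn

lemma approxNumber_le_norm {n : ℕ} (hn : 1 ≤ n) (S : X →L[ℝ] Y) :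
    approxNumber n S ≤ ‖S‖ :=
  csInf_le ⟨0, approxSet_nonneg⟩ (approxSet_mem_zero hn S)

lemma approxNumber_comp_le {n : ℕ} (hn : 1 ≤ n) (S : X →L[ℝ] Y)
    (P : Y →L[ℝ] W) (J : Z →L[ℝ] X) (hP : ‖P‖ ≤ 1) (hJ : ‖J‖ ≤ 1) :
    approxNumber n (P.comp (S.comp J)) ≤ approxNumber n S := by
  refine le_csInf ⟨_, approxSet_mem_zero hn S⟩ ?_
  rintro r ⟨L, hL, rfl⟩
  have hrk : LinearMap.rank ((P.comp (L.comp J) : Z →L[ℝ] W) : Z →ₗ[ℝ] W) < (n : Cardinal) := by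
    rw [ContinuousLinearMap.toLinearMap_comp]
    have h1 := LinearMap.lift_rank_comp_le_right ((L.comp J : Z →L[ℝ] Y) : Z →ₗ[ℝ] Y)
      (P : Y →ₗ[ℝ] W)
    have h2 : LinearMap.rank ((L.comp J : Z →L[ℝ] Y) : Z →ₗ[ℝ] Y)
        ≤ LinearMap.rank (L : X →ₗ[ℝ] Y) := by
      rw [ContinuousLinearMap.toLinearMap_comp]
      exact LinearMap.rank_comp_le_left _ _
    have h3 := h1.trans (Cardinal.lift_le.mpr h2)
    have h4 := h3.trans_lt (Cardinal.lift_lt.mpr hL)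
    rw [Cardinal.lift_natCast] at h4
    rw [← Cardinal.lift_lt.{_, _}]
    rw [Cardinal.lift_natCast]
    exact_mod_cast h4
  have hmem : ‖P.comp (S.comp J) - P.comp (L.comp J)‖ ∈
      {r : ℝ | ∃ L' : Z →L[ℝ] W,
        LinearMap.rank (L' : Z →ₗ[ℝ] W) < n ∧ r = ‖P.comp (S.comp J) - L'‖} :=
    ⟨P.comp (L.comp J), hrk, rfl⟩
  refine le_trans (csInf_le ⟨0, approxSet_nonneg⟩ hmem) ?_
  have : P.comp (S.comp J) - P.comp (L.comp J) = P.comp (((S - L).comp J)) := by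
    ext z; simp
  rw [this]
  calc ‖P.comp ((S - L).comp J)‖ ≤ ‖P‖ * ‖(S - L).comp J‖ := ContinuousLinearMap.opNorm_comp_le _ _
    _ ≤ ‖P‖ * (‖S - L‖ * ‖J‖) := by
        exact mul_le_mul_of_nonneg_left (ContinuousLinearMap.opNorm_comp_le _ _) (norm_nonneg _)
    _ ≤ 1 * (‖S - L‖ * 1) := by
        apply mul_le_mul hP _ (by positivity) zero_le_one
        exact mul_le_mul_of_nonneg_left hJ (norm_nonneg _)
    _ = ‖S - L‖ := by ring

lemma gelfandSet_nonneg {n : ℕ} {S : X →L[ℝ] Y} :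
    ∀ r ∈ {r : ℝ | ∃ M : Submodule ℝ X, IsClosed (M : Set X) ∧ Module.rank ℝ (X ⧸ M) < n ∧
      r = ‖S.comp M.subtypeL‖}, 0 ≤ r := by
  rintro r ⟨M, -, -, rfl⟩; exact norm_nonneg (S.comp M.subtypeL)

lemma gelfandNumber_nonneg (n : ℕ) (S : X →L[ℝ] Y) : 0 ≤ gelfandNumber n S :=
  Real.sInf_nonneg gelfandSet_nonneg

lemma gelfandNumber_le {n : ℕ} (S : X →L[ℝ] Y) (M : Submodule ℝ X)
    (hM : IsClosed (M : Set X)) (hrank : Module.rank ℝ (X ⧸ M) < n) :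
    gelfandNumber n S ≤ ‖S.comp M.subtypeL‖ :=
  csInf_le ⟨0, gelfandSet_nonneg⟩ ⟨M, hM, hrank, rfl⟩

lemma hilbertNumber_nonneg (n : ℕ) (S : X →L[ℝ] Y) : 0 ≤ hilbertNumber n S := by
  apply Real.sSup_nonneg
  rintro r ⟨A, B, -, -, rfl⟩
  exact div_nonneg (approxNumber_nonneg _ _) (by positivity)

lemma approxNumber_le_hilbert_mul {n : ℕ} (hn : 1 ≤ n) (S : X →L[ℝ] Y)
    (A : Ell2 →L[ℝ] X) (B : Y →L[ℝ] Ell2) (hA : A ≠ 0) (hB : B ≠ 0) :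
    approxNumber n (B.comp (S.comp A)) ≤ hilbertNumber n S * (‖B‖ * ‖A‖) := by
  have hpos : 0 < ‖B‖ * ‖A‖ := mul_pos (norm_pos_iff.mpr hB) (norm_pos_iff.mpr hA)
  have hbdd : BddAbove {r : ℝ | ∃ (A : Ell2 →L[ℝ] X) (B : Y →L[ℝ] Ell2), A ≠ 0 ∧ B ≠ 0 ∧
      r = approxNumber n (B.comp (S.comp A)) / (‖B‖ * ‖A‖)} := by
    refine ⟨‖S‖, ?_⟩
    rintro r ⟨A', B', hA', hB', rfl⟩
    have hpos' : 0 < ‖B'‖ * ‖A'‖ := mul_pos (norm_pos_iff.mpr hB') (norm_pos_iff.mpr hA')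
    rw [div_le_iff₀ hpos']
    calc approxNumber n (B'.comp (S.comp A')) ≤ ‖B'.comp (S.comp A')‖ :=
          approxNumber_le_norm hn _
      _ ≤ ‖B'‖ * ‖S.comp A'‖ := ContinuousLinearMap.opNorm_comp_le _ _
      _ ≤ ‖B'‖ * (‖S‖ * ‖A'‖) :=
          mul_le_mul_of_nonneg_left (ContinuousLinearMap.opNorm_comp_le _ _) (norm_nonneg _)
      _ = ‖S‖ * (‖B'‖ * ‖A'‖) := by ring
  have hmem : approxNumber n (B.comp (S.comp A)) / (‖B‖ * ‖A‖) ∈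
      {r : ℝ | ∃ (A : Ell2 →L[ℝ] X) (B : Y →L[ℝ] Ell2), A ≠ 0 ∧ B ≠ 0 ∧
      r = approxNumber n (B.comp (S.comp A)) / (‖B‖ * ‖A‖)} := ⟨A, B, hA, hB, rfl⟩
  have := le_csSup hbdd hmem
  rw [div_le_iff₀ hpos] at this
  exact this.trans_eq rfl

end Basic

section Det
open Module

lemma det_toEuclideanLin {m : ℕ} (A : Matrix (Fin m) (Fin m) ℝ) :
    LinearMap.det (Matrix.toEuclideanLin A) = A.det := by
  have : Matrix.toEuclideanLin A =
      (WithLp.linearEquiv 2 ℝ (Fin m → ℝ)).symm.conj (Matrix.toLin' A) := by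
    apply LinearMap.ext; intro x; rfl
  rw [this, LinearEquiv.conj_apply, LinearMap.comp_assoc, LinearMap.det_conj, LinearMap.det_toLin']

lemma prod_sqrt {ι : Type*} (s : Finset ι) (f : ι → ℝ) (hf : ∀ i ∈ s, 0 ≤ f i) :
    ∏ i ∈ s, Real.sqrt (f i) = Real.sqrt (∏ i ∈ s, f i) := by
  induction s using Finset.cons_induction with
  | empty => simp
  | cons a s ha ih =>
    rw [Finset.prod_cons, Finset.prod_cons, ih (fun i hi => hf i (Finset.mem_cons_of_mem hi)),
      Real.sqrt_mul (hf a (Finset.mem_cons_self a s))]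

lemma abs_det_le_prod_approxNumber (m : ℕ) (g : Matrix (Fin m) (Fin m) ℝ)
    (T : EuclideanSpace ℝ (Fin m) →L[ℝ] EuclideanSpace ℝ (Fin m))
    (hT : (T : EuclideanSpace ℝ (Fin m) →ₗ[ℝ] EuclideanSpace ℝ (Fin m)) = Matrix.toEuclideanLin g) :
    |g.det| ≤ ∏ i : Fin m, approxNumber (i + 1 : ℕ) T := by
  classical
  set E := EuclideanSpace ℝ (Fin m)
  set Tl : E →ₗ[ℝ] E := Matrix.toEuclideanLin g with hTl
  have hG : (LinearMap.adjoint Tl * Tl).IsSymmetric := LinearMap.isSymmetric_adjoint_mul_self Tl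
  set G : E →ₗ[ℝ] E := LinearMap.adjoint Tl * Tl with hGdef
  have hfr : Module.finrank ℝ E = m := finrank_euclideanSpace_fin
  set b := hG.eigenvectorBasis hfr with hb
  set μ := hG.eigenvalues hfr with hμdef
  have happly : ∀ i, G (b i) = (μ i) • b i := fun i => by
    exact hG.apply_eigenvectorBasis hfr i
  have hGinner : ∀ v : E, inner ℝ (G v) v = ‖Tl v‖ ^ 2 := fun v => by
    rw [Module.End.mul_apply, LinearMap.adjoint_inner_left, ← real_inner_self_eq_norm_sq]
  have hμnonneg : ∀ i, 0 ≤ μ i := by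
    intro i
    have h1 : inner ℝ (G (b i)) (b i) = (‖Tl (b i)‖ ^ 2 : ℝ) := hGinner (b i)
    rw [happly i, real_inner_smul_left, real_inner_self_eq_norm_sq,
      b.orthonormal.1 i] at h1
    simp only [one_pow, mul_one] at h1
    rw [h1]; positivity
  -- determinant of G
  have hdetG : LinearMap.det G = ∏ i, μ i := by
    have hmat : LinearMap.toMatrix b.toBasis b.toBasis G = Matrix.diagonal μ := by
      ext i j
      rw [LinearMap.toMatrix_apply, OrthonormalBasis.coe_toBasis, happly j, map_smul,
        ← OrthonormalBasis.coe_toBasis, Basis.repr_self]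
      by_cases h : i = j
      · subst h; simp [Matrix.diagonal]
      · simp [Matrix.diagonal, h, Finsupp.single_apply, Ne.symm h]
    rw [← LinearMap.det_toMatrix b.toBasis, hmat, Matrix.det_diagonal]
  have hdetG' : LinearMap.det G = g.det ^ 2 := by
    rw [hGdef, map_mul LinearMap.det, hTl, ← Matrix.toEuclideanLin_conjTranspose_eq_adjoint,
      det_toEuclideanLin, det_toEuclideanLin, Matrix.det_conjTranspose]
    simp [sq]
  -- sorted eigenvalues
  set σ := Tuple.sort μ with hσ
  set ν : Fin m → ℝ := fun i => μ (σ i.rev) with hν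
  have hνanti : ∀ i j : Fin m, i ≤ j → ν j ≤ ν i := by
    intro i j hij
    exact Tuple.monotone_sort μ (Fin.rev_le_rev.mpr hij)
  have hνnonneg : ∀ i, 0 ≤ ν i := fun i => hμnonneg _
  have key : ∀ i : Fin m, Real.sqrt (ν i) ≤ approxNumber ((i : ℕ) + 1) T := by
    intro i
    refine le_csInf ⟨_, approxSet_mem_zero (Nat.le_add_left 1 _) T⟩ ?_
    rintro r ⟨L, hL, rfl⟩
    -- the subspace W spanned by top i+1 eigenvectors
    set c : Fin m → E := fun j => b (σ j.rev) with hc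
    have hcorth : Orthonormal ℝ c :=
      b.orthonormal.comp _ (σ.injective.comp Fin.rev_injective)
    set s : Finset (Fin m) := Finset.Iic i with hs
    set W : Submodule ℝ E := Submodule.span ℝ (Set.range (c ∘ (Subtype.val : {j // j ∈ s} → Fin m))) with hW
    have hWdim : finrank ℝ W = (i : ℕ) + 1 := by
      rw [finrank_span_eq_card
        ((hcorth.comp Subtype.val Subtype.val_injective).linearIndependent)]
      rw [Fintype.card_coe, hs, Fin.card_Iic]
    -- find a nonzero x in W with L x = 0
    have hLrank : finrank ℝ (LinearMap.range (L : E →ₗ[ℝ] E)) < (i : ℕ) + 1 := by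
      have := hL
      rw [LinearMap.rank, ← finrank_eq_rank] at this
      exact_mod_cast this
    set φ := (L : E →ₗ[ℝ] E).domRestrict W with hφ
    have hker : 0 < finrank ℝ (LinearMap.ker φ) := by
      have hsum := LinearMap.finrank_range_add_finrank_ker φ
      rw [hWdim] at hsum
      have hrle : finrank ℝ (LinearMap.range φ) ≤
          finrank ℝ (LinearMap.range (L : E →ₗ[ℝ] E)) := by
        apply Submodule.finrank_mono
        rintro y ⟨w, rfl⟩
        exact ⟨w, rfl⟩
      omega
    have : Nontrivial (LinearMap.ker φ) := Module.nontrivial_of_finrank_pos hker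
    obtain ⟨z, hzne⟩ := exists_ne (0 : LinearMap.ker φ)
    have hxW : ((z : ↥W) : E) ∈ W := (z : ↥W).2
    have hLx : L ((z : ↥W) : E) = 0 := z.2
    have hx0 : ((z : ↥W) : E) ≠ 0 := by
      simp only [ne_eq, Submodule.coe_eq_zero]
      exact hzne
    -- quadratic form bound on W
    set y : E := ((z : ↥W) : E) with hy
    set t : Finset (Fin m) := s.image (fun k => σ k.rev) with ht
    have hrepr0 : ∀ j : Fin m, j ∉ t → b.repr y j = 0 := by
      intro j hj
      rw [OrthonormalBasis.repr_apply_apply]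
      have hWle : W ≤ LinearMap.ker (innerSL ℝ (b j) : E →ₗ[ℝ] ℝ) := by
        rw [hW, Submodule.span_le]
        rintro - ⟨⟨k, hk⟩, rfl⟩
        have hne : σ (Fin.rev k) ≠ j := by
          intro h
          exact hj (Finset.mem_image.mpr ⟨k, hk, h⟩)
        simp only [SetLike.mem_coe, LinearMap.mem_ker, ContinuousLinearMap.coe_coe,
          Function.comp_apply, innerSL_apply_apply]
        exact b.orthonormal.2 (Ne.symm hne)
      have := hWle hxW
      simpa using this
    have hnormy : ‖y‖ ^ 2 = ∑ j, (b.repr y j) ^ 2 := by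
      rw [← b.repr.norm_map y, EuclideanSpace.norm_eq, Real.sq_sqrt (by positivity)]
      congr 1
      ext j
      rw [Real.norm_eq_abs, sq_abs]
    have hTly : ‖Tl y‖ ^ 2 = ∑ j, μ j * (b.repr y j) ^ 2 := by
      rw [← hGinner y, ← b.repr.inner_map_map (G y) y]
      rw [PiLp.inner_apply]
      congr 1
      ext j
      rw [hG.eigenvectorBasis_apply_self_apply hfr]
      simp [RCLike.inner_apply]
      ring
    have hquad : ν i * ‖y‖ ^ 2 ≤ ‖Tl y‖ ^ 2 := by
      rw [hTly, hnormy, Finset.mul_sum]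
      rw [← Finset.sum_subset (Finset.subset_univ t)
        (fun j _ hj => by rw [hrepr0 j hj]; ring),
        ← Finset.sum_subset (Finset.subset_univ t)
        (fun j _ hj => by rw [hrepr0 j hj]; ring)]
      apply Finset.sum_le_sum
      intro j hj
      obtain ⟨k, hk, rfl⟩ := Finset.mem_image.mp hj
      have : ν i ≤ μ (σ k.rev) := hνanti k i (Finset.mem_Iic.mp hk)
      exact mul_le_mul_of_nonneg_right this (sq_nonneg _)
    -- conclude
    have hTy : T y = Tl y := LinearMap.congr_fun hT y
    have hlow : Real.sqrt (ν i) * ‖y‖ ≤ ‖(T - L) y‖ := by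
      have h1 : ‖(T - L) y‖ = ‖Tl y‖ := by
        rw [ContinuousLinearMap.sub_apply, hLx, sub_zero, hTy]
      rw [h1]
      have := Real.sqrt_le_sqrt hquad
      rw [Real.sqrt_mul (hνnonneg i), Real.sqrt_sq (norm_nonneg y),
        Real.sqrt_sq (norm_nonneg _)] at this
      exact this
    have hup : ‖(T - L) y‖ ≤ ‖T - L‖ * ‖y‖ := (T - L).le_opNorm y
    have hypos : 0 < ‖y‖ := norm_pos_iff.mpr hx0
    nlinarith [Real.sqrt_nonneg (ν i)]
  -- combine
  have hprodν : ∏ i, ν i = ∏ i, μ i := by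
    exact Equiv.prod_comp (Fin.revPerm.trans σ) μ
  calc |g.det| = Real.sqrt (g.det ^ 2) := (Real.sqrt_sq_eq_abs _).symm
    _ = Real.sqrt (∏ i, ν i) := by rw [hprodν, ← hdetG, hdetG']
    _ = ∏ i : Fin m, Real.sqrt (ν i) := by
        rw [prod_sqrt Finset.univ ν (fun i _ => hνnonneg i)]
    _ ≤ ∏ i : Fin m, approxNumber ((i : ℕ) + 1) T := by
        apply Finset.prod_le_prod (fun i _ => Real.sqrt_nonneg _) (fun i _ => key i)

end Det

section L2
open Finset

noncomputable def e2 (i : ℕ) : Ell2 := lp.single 2 i (1 : ℝ)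

lemma le_sqrt_mul_of_sq_le {a c : ℝ} {n : ℕ} (ha : 0 ≤ a) (hc : 0 ≤ c)
    (h : a ^ 2 ≤ n * c ^ 2) : a ≤ Real.sqrt n * c := by
  have h2 := Real.sqrt_le_sqrt h
  rwa [Real.sqrt_sq ha, Real.sqrt_mul (Nat.cast_nonneg n), Real.sqrt_sq hc] at h2

lemma le_of_sq_le_sq' {a c : ℝ} (ha : 0 ≤ a) (hc : 0 ≤ c) (h : a ^ 2 ≤ c ^ 2) : a ≤ c := by
  have h2 := Real.sqrt_le_sqrt h
  rwa [Real.sqrt_sq ha, Real.sqrt_sq hc] at h2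

lemma euclidean_sum_apply {ι κ : Type*} (s : Finset ι) (v : ι → EuclideanSpace ℝ κ) (j : κ) :
    (∑ k ∈ s, v k) j = ∑ k ∈ s, v k j := by
  induction s using Finset.cons_induction with
  | empty => rfl
  | cons a s ha ih => rw [Finset.sum_cons, Finset.sum_cons, ← ih]; rfl

lemma ell2_sum_apply {ι : Type*} (s : Finset ι) (v : ι → Ell2) (j : ℕ) :
    (∑ k ∈ s, v k) j = ∑ k ∈ s, v k j := by
  induction s using Finset.cons_induction with
  | empty => rfl
  | cons a s ha ih => rw [Finset.sum_cons, Finset.sum_cons, ← ih]; rfl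

lemma inner_e2_left (i : ℕ) (f : Ell2) : (inner ℝ (e2 i) f : ℝ) = f i := by
  rw [e2, lp.inner_single_left]
  simp [RCLike.inner_apply]

lemma e2_apply_self (i : ℕ) : (e2 i) i = 1 := lp.single_apply_self 2 i 1

lemma e2_apply_ne {i j : ℕ} (h : j ≠ i) : (e2 i) j = 0 := lp.single_apply_ne 2 i 1 h

lemma orth_e2 : Orthonormal ℝ e2 := by
  rw [orthonormal_iff_ite]
  intro i j
  rw [inner_e2_left]
  by_cases h : i = j
  · subst h; rw [e2_apply_self, if_pos rfl]
  · rw [e2_apply_ne h, if_neg h]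

lemma bessel_e2 {n : ℕ} (ξ : Ell2) : ∑ j : Fin n, (ξ (j : ℕ)) ^ 2 ≤ ‖ξ‖ ^ 2 := by
  have h := orth_e2.sum_inner_products_le (s := Finset.range n) ξ
  have h2 : ∑ i ∈ Finset.range n, ‖(inner ℝ (e2 i) ξ : ℝ)‖ ^ 2 = ∑ j : Fin n, (ξ (j : ℕ)) ^ 2 := by
    rw [Fin.sum_univ_eq_sum_range (fun i => (ξ i) ^ 2)]
    refine Finset.sum_congr rfl fun i _ => ?_
    rw [inner_e2_left, Real.norm_eq_abs, sq_abs]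
  rw [h2] at h
  exact h

variable {X Y : Type*} [NormedAddCommGroup X] [NormedSpace ℝ X]
  [NormedAddCommGroup Y] [NormedSpace ℝ Y]

lemma exists_A (n : ℕ) (x : Fin n → X) (hx : ∀ j, ‖x j‖ ≤ 1) :
    ∃ A : Ell2 →L[ℝ] X, (∀ ξ : Ell2, A ξ = ∑ j : Fin n, ξ (j : ℕ) • x j) ∧
      ‖A‖ ≤ Real.sqrt n := by
  refine ⟨∑ j : Fin n, (innerSL ℝ (e2 (j : ℕ))).smulRight (x j), fun ξ => ?_, ?_⟩
  · rw [ContinuousLinearMap.sum_apply]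
    exact Finset.sum_congr rfl fun j _ => by
      rw [ContinuousLinearMap.smulRight_apply, innerSL_apply_apply, inner_e2_left]
  · refine ContinuousLinearMap.opNorm_le_bound _ (Real.sqrt_nonneg _) fun ξ => ?_
    rw [ContinuousLinearMap.sum_apply]
    calc ‖∑ j : Fin n, ((innerSL ℝ (e2 (j:ℕ))).smulRight (x j)) ξ‖
        ≤ ∑ j : Fin n, ‖ξ (j : ℕ)‖ * ‖x j‖ := by
          refine (norm_sum_le _ _).trans (Finset.sum_le_sum fun j _ => ?_)
          rw [ContinuousLinearMap.smulRight_apply, innerSL_apply_apply, inner_e2_left, norm_smul]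
      _ ≤ ∑ j : Fin n, |ξ (j : ℕ)| := by
          refine Finset.sum_le_sum fun j _ => ?_
          rw [Real.norm_eq_abs]
          exact mul_le_of_le_one_right (abs_nonneg _) (hx j)
      _ ≤ Real.sqrt n * ‖ξ‖ := by
          have h1 := sq_sum_le_card_mul_sum_sq (s := (Finset.univ : Finset (Fin n)))
            (f := fun j : Fin n => |ξ (j : ℕ)|)
          simp only [sq_abs, Finset.card_univ, Fintype.card_fin] at h1
          have h2 : (∑ j : Fin n, |ξ (j : ℕ)|) ^ 2 ≤ n * ‖ξ‖ ^ 2 :=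
            h1.trans (by
              have hb := bessel_e2 (n := n) ξ
              nlinarith [hb, Nat.cast_nonneg (α := ℝ) n])
          exact le_sqrt_mul_of_sq_le
            (Finset.sum_nonneg (fun j _ => abs_nonneg (ξ (j : ℕ)))) (norm_nonneg ξ) h2

lemma exists_B (n : ℕ) (f : Fin n → Y →L[ℝ] ℝ) (hf : ∀ i, ‖f i‖ ≤ 1) :
    ∃ B : Y →L[ℝ] Ell2, (∀ y : Y, B y = ∑ i : Fin n, f i y • e2 (i : ℕ)) ∧
      ‖B‖ ≤ Real.sqrt n := by
  refine ⟨∑ i : Fin n, (f i).smulRight (e2 (i : ℕ)), fun y => ?_, ?_⟩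
  · rw [ContinuousLinearMap.sum_apply]
    exact Finset.sum_congr rfl fun i _ => by rw [ContinuousLinearMap.smulRight_apply]
  · refine ContinuousLinearMap.opNorm_le_bound _ (Real.sqrt_nonneg _) fun y => ?_
    have hBy : (∑ i : Fin n, (f i).smulRight (e2 (i : ℕ))) y
        = ∑ i : Fin n, f i y • e2 (i : ℕ) := by
      rw [ContinuousLinearMap.sum_apply]
      exact Finset.sum_congr rfl fun i _ => by rw [ContinuousLinearMap.smulRight_apply]
    rw [hBy]
    have horth : Orthonormal ℝ (fun i : Fin n => e2 (i : ℕ)) :=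
      orth_e2.comp _ Fin.val_injective
    have hsq : ‖∑ i : Fin n, f i y • e2 (i : ℕ)‖ ^ 2 = ∑ i : Fin n, (f i y) ^ 2 := by
      rw [← real_inner_self_eq_norm_sq]
      rw [horth.inner_sum (fun i => f i y) (fun i => f i y) Finset.univ]
      simp [sq]
    have hb : ∑ i : Fin n, (f i y) ^ 2 ≤ n * ‖y‖ ^ 2 := by
      calc ∑ i : Fin n, (f i y) ^ 2 ≤ ∑ _i : Fin n, ‖y‖ ^ 2 := by
            refine Finset.sum_le_sum fun i _ => ?_
            have h1 : |f i y| ≤ ‖y‖ := by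
              have := (f i).le_opNorm y
              rw [Real.norm_eq_abs] at this
              exact this.trans (mul_le_of_le_one_left (norm_nonneg _) (hf i))
            calc (f i y) ^ 2 = |f i y| ^ 2 := (sq_abs _).symm
              _ ≤ ‖y‖ ^ 2 := by
                  apply pow_le_pow_left₀ (abs_nonneg _) h1
        _ = n * ‖y‖ ^ 2 := by rw [Finset.sum_const, Finset.card_univ, Fintype.card_fin,
              nsmul_eq_mul]
    have h2 : ‖∑ i : Fin n, f i y • e2 (i : ℕ)‖ ^ 2 ≤ (Real.sqrt n * ‖y‖) ^ 2 := by
      rw [hsq, mul_pow, Real.sq_sqrt (Nat.cast_nonneg n)]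
      exact hb
    exact le_of_sq_le_sq' (norm_nonneg _) (by positivity) h2

lemma exists_J (n : ℕ) :
    ∃ J : EuclideanSpace ℝ (Fin n) →L[ℝ] Ell2,
      (∀ v : EuclideanSpace ℝ (Fin n), J v = ∑ j : Fin n, v j • e2 (j : ℕ)) ∧ ‖J‖ ≤ 1 := by
  refine ⟨∑ j : Fin n, (EuclideanSpace.proj j).smulRight (e2 (j : ℕ)), fun v => ?_, ?_⟩
  · rw [ContinuousLinearMap.sum_apply]
    exact Finset.sum_congr rfl fun j _ => by
      rw [ContinuousLinearMap.smulRight_apply, PiLp.proj_apply]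
  · refine ContinuousLinearMap.opNorm_le_bound _ zero_le_one fun v => ?_
    have hJv : (∑ j : Fin n, (EuclideanSpace.proj j).smulRight (e2 (j : ℕ))) v
        = ∑ j : Fin n, v j • e2 (j : ℕ) := by
      rw [ContinuousLinearMap.sum_apply]
      exact Finset.sum_congr rfl fun j _ => by
        rw [ContinuousLinearMap.smulRight_apply, PiLp.proj_apply]
    rw [hJv, one_mul]
    have horth : Orthonormal ℝ (fun i : Fin n => e2 (i : ℕ)) :=
      orth_e2.comp _ Fin.val_injective
    have hsq : ‖∑ j : Fin n, v j • e2 (j : ℕ)‖ ^ 2 = ∑ j : Fin n, (v j) ^ 2 := by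
      rw [← real_inner_self_eq_norm_sq,
        horth.inner_sum (fun j => v j) (fun j => v j) Finset.univ]
      simp [sq]
    have hv : ‖v‖ ^ 2 = ∑ j : Fin n, (v j) ^ 2 := by
      rw [EuclideanSpace.norm_eq, Real.sq_sqrt (by positivity)]
      exact Finset.sum_congr rfl fun j _ => by rw [Real.norm_eq_abs, sq_abs]
    exact le_of_sq_le_sq' (norm_nonneg _) (norm_nonneg v) (by rw [hsq, hv])

lemma exists_P (n : ℕ) :
    ∃ P : Ell2 →L[ℝ] EuclideanSpace ℝ (Fin n),
      (∀ (ξ : Ell2) (j : Fin n), P ξ j = ξ (j : ℕ)) ∧ ‖P‖ ≤ 1 := by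
  refine ⟨∑ j : Fin n, (innerSL ℝ (e2 (j : ℕ))).smulRight (EuclideanSpace.single j (1:ℝ)),
    fun ξ j => ?_, ?_⟩
  · rw [ContinuousLinearMap.sum_apply, euclidean_sum_apply]
    rw [Finset.sum_eq_single j]
    · rw [ContinuousLinearMap.smulRight_apply, innerSL_apply_apply, inner_e2_left]
      have : (EuclideanSpace.single j (1:ℝ)) j = 1 := by
        rw [EuclideanSpace.single_apply, if_pos rfl]
      rw [PiLp.smul_apply, this, smul_eq_mul, mul_one]
    · intro k _ hk
      rw [ContinuousLinearMap.smulRight_apply, PiLp.smul_apply,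
        EuclideanSpace.single_apply, if_neg (Ne.symm hk), smul_eq_mul, mul_zero]
    · intro h; exact absurd (Finset.mem_univ j) h
  · refine ContinuousLinearMap.opNorm_le_bound _ zero_le_one fun ξ => ?_
    rw [one_mul]
    set P := ∑ j : Fin n, (innerSL ℝ (e2 (j : ℕ))).smulRight (EuclideanSpace.single j (1:ℝ))
      with hP
    have hcoord : ∀ j : Fin n, P ξ j = ξ (j : ℕ) := by
      intro j
      rw [hP, ContinuousLinearMap.sum_apply, euclidean_sum_apply]
      rw [Finset.sum_eq_single j]
      · rw [ContinuousLinearMap.smulRight_apply, innerSL_apply_apply, inner_e2_left]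
        have : (EuclideanSpace.single j (1:ℝ)) j = 1 := by
          rw [EuclideanSpace.single_apply, if_pos rfl]
        rw [PiLp.smul_apply, this, smul_eq_mul, mul_one]
      · intro k _ hk
        rw [ContinuousLinearMap.smulRight_apply, PiLp.smul_apply,
          EuclideanSpace.single_apply, if_neg (Ne.symm hk), smul_eq_mul, mul_zero]
      · intro h; exact absurd (Finset.mem_univ j) h
    have h1 : ‖P ξ‖ ^ 2 ≤ ‖ξ‖ ^ 2 := by
      have : ‖P ξ‖ ^ 2 = ∑ j : Fin n, (ξ (j : ℕ)) ^ 2 := by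
        rw [EuclideanSpace.norm_eq, Real.sq_sqrt (by positivity)]
        exact Finset.sum_congr rfl fun j _ => by rw [hcoord j, Real.norm_eq_abs, sq_abs]
      rw [this]
      exact bessel_e2 ξ
    exact le_of_sq_le_sq' (norm_nonneg _) (norm_nonneg ξ) h1

end L2

section Construct
variable {X Y : Type*} [NormedAddCommGroup X] [NormedSpace ℝ X]
  [NormedAddCommGroup Y] [NormedSpace ℝ Y]

lemma pietsch_construction (S : X →L[ℝ] Y) (n : ℕ) {ε : ℝ} (hε0 : 0 < ε) (hε1 : ε < 1)
    (hc : ∀ k : ℕ, 1 ≤ k → k ≤ n → 0 < gelfandNumber k S) :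
    ∀ k : ℕ, k ≤ n → ∃ (x : Fin k → X) (f : Fin k → Y →L[ℝ] ℝ),
      (∀ i, ‖x i‖ ≤ 1) ∧ (∀ i, ‖f i‖ ≤ 1) ∧
      (∀ i j : Fin k, (i : ℕ) < (j : ℕ) → f i (S (x j)) = 0) ∧
      (∀ i : Fin k, (1 - ε) * gelfandNumber ((i : ℕ) + 1) S ≤ f i (S (x i))) := by
  intro k
  induction k with
  | zero =>
    exact fun _ => ⟨Fin.elim0, Fin.elim0, fun i => i.elim0, fun i => i.elim0,
      fun i => i.elim0, fun i => i.elim0⟩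
  | succ k ih =>
    intro hkn
    obtain ⟨x, f, hx, hf, htri, hdiag⟩ := ih (Nat.le_of_succ_le hkn)
    set M : Submodule ℝ X := ⨅ i : Fin k, LinearMap.ker (((f i).comp S : X →L[ℝ] ℝ) : X →ₗ[ℝ] ℝ) with hM
    have hMclosed : IsClosed (M : Set X) := by
      rw [hM, Submodule.coe_iInf]
      exact isClosed_iInter fun i => ContinuousLinearMap.isClosed_ker ((f i).comp S)
    have hrank : Module.rank ℝ (X ⧸ M) < ((k + 1 : ℕ) : Cardinal) := by
      set π : X →ₗ[ℝ] (Fin k → ℝ) :=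
        LinearMap.pi (fun i => (((f i).comp S : X →L[ℝ] ℝ) : X →ₗ[ℝ] ℝ)) with hπ
      have hker : LinearMap.ker π = M := by
        rw [hπ, LinearMap.ker_pi, hM]
      have he := (LinearMap.quotKerEquivRange π).lift_rank_eq
      rw [hker] at he
      have h2 : Module.rank ℝ (LinearMap.range π) ≤ (k : Cardinal) :=
        (Submodule.rank_le _).trans (le_of_eq (rank_fin_fun k))
      refine Cardinal.lift_lt.{_, 0}.mp ?_
      rw [he]
      refine lt_of_le_of_lt (Cardinal.lift_le.mpr h2) ?_
      rw [Cardinal.lift_natCast, Cardinal.lift_natCast]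
      exact_mod_cast Nat.lt_succ_self k
    have hgel : gelfandNumber (k + 1) S ≤ ‖S.comp M.subtypeL‖ :=
      gelfandNumber_le S M hMclosed hrank
    have hcpos : 0 < gelfandNumber (k + 1) S := hc (k + 1) (Nat.le_add_left 1 k) hkn
    have hCnonneg : 0 ≤ (1 - ε) * gelfandNumber (k + 1) S := by nlinarith
    have hlt : (1 - ε) * gelfandNumber (k + 1) S < ‖S.comp M.subtypeL‖ :=
      lt_of_lt_of_le (by nlinarith) hgel
    have hex : ∃ u : M, ¬ (‖(S.comp M.subtypeL) u‖ ≤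
        (1 - ε) * gelfandNumber (k + 1) S * ‖u‖) := by
      by_contra hall
      push_neg at hall
      exact absurd (ContinuousLinearMap.opNorm_le_bound _ hCnonneg hall) (not_le.mpr hlt)
    obtain ⟨u, hu⟩ := hex
    rw [not_le] at hu
    have hune : (u : X) ≠ 0 := by
      intro h
      have hu0 : u = 0 := Subtype.ext h
      rw [hu0] at hu
      simp at hu
    have hupos : 0 < ‖(u : X)‖ := norm_pos_iff.mpr hune
    set xk : X := ‖(u : X)‖⁻¹ • (u : X) with hxk
    have hxkM : xk ∈ M := M.smul_mem _ u.2
    have hxknorm : ‖xk‖ ≤ 1 := by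
      rw [hxk, norm_smul, norm_inv, norm_norm, inv_mul_cancel₀ (ne_of_gt hupos)]
    have hSu : (S.comp M.subtypeL) u = S (u : X) := rfl
    have hSxk : (1 - ε) * gelfandNumber (k + 1) S < ‖S xk‖ := by
      have h1 : ‖S xk‖ = ‖(u : X)‖⁻¹ * ‖S (u : X)‖ := by
        rw [hxk, map_smul, norm_smul, norm_inv, norm_norm]
      rw [hSu] at hu
      have h3 := mul_lt_mul_of_pos_left hu (inv_pos.mpr hupos)
      rw [h1]
      calc (1 - ε) * gelfandNumber (k + 1) S
          = ‖(u : X)‖⁻¹ * ((1 - ε) * gelfandNumber (k + 1) S * ‖(u : X)‖) := by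
            rw [mul_comm _ ‖(u : X)‖, ← mul_assoc, inv_mul_cancel₀ (ne_of_gt hupos), one_mul]
        _ < ‖(u : X)‖⁻¹ * ‖S (u : X)‖ := h3
    have hSxk0 : S xk ≠ 0 := by
      intro h
      rw [h, norm_zero] at hSxk
      nlinarith [hSxk, hcpos]
    obtain ⟨g, hg1, hgx⟩ := exists_dual_vector ℝ (S xk) (norm_ne_zero_iff.mpr hSxk0)
    refine ⟨Fin.snoc x xk, Fin.snoc f g, ?_, ?_, ?_, ?_⟩
    · intro i
      refine Fin.lastCases ?_ ?_ i
      · rw [Fin.snoc_last]; exact hxknorm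
      · intro i'; rw [Fin.snoc_castSucc]; exact hx i'
    · intro i
      refine Fin.lastCases ?_ ?_ i
      · rw [Fin.snoc_last]; exact le_of_eq hg1
      · intro i'; rw [Fin.snoc_castSucc]; exact hf i'
    · intro i j hij
      rcases Fin.eq_castSucc_or_eq_last j with ⟨j', rfl⟩ | rfl
      · have hine : i ≠ Fin.last k := by
          intro h
          rw [h] at hij
          simp only [Fin.val_last, Fin.coe_castSucc] at hij
          omega
        obtain ⟨i', rfl⟩ := Fin.exists_castSucc_eq.mpr hine
        rw [Fin.snoc_castSucc, Fin.snoc_castSucc]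
        exact htri i' j' (by simpa using hij)
      · have hine : i ≠ Fin.last k := by
          intro h
          rw [h] at hij
          omega
        obtain ⟨i', rfl⟩ := Fin.exists_castSucc_eq.mpr hine
        rw [Fin.snoc_castSucc, Fin.snoc_last]
        have hmem := (Submodule.mem_iInf _).mp hxkM i'
        exact LinearMap.mem_ker.mp hmem
    · intro i
      refine Fin.lastCases ?_ ?_ i
      · rw [Fin.snoc_last, Fin.snoc_last]
        have : ((Fin.last k : Fin (k+1)) : ℕ) = k := rfl
        rw [this, hgx]
        norm_cast
        exact le_of_lt hSxk
      · intro i'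
        rw [Fin.snoc_castSucc, Fin.snoc_castSucc]
        exact hdiag i'

end Construct

lemma prod_Icc_one_eq_prod_fin (n : ℕ) (F : ℕ → ℝ) :
    ∏ k ∈ Finset.Icc 1 n, F k = ∏ i : Fin n, F ((i : ℕ) + 1) := by
  induction n with
  | zero => simp
  | succ n ih =>
    rw [Finset.prod_Icc_succ_top (Nat.le_add_left 1 n), ih, Fin.prod_univ_castSucc]
    simp

theorem prod_gelfand_le_prod_hilbert
    {X Y : Type*} [NormedAddCommGroup X] [NormedSpace ℝ X] [CompleteSpace X]
    [NormedAddCommGroup Y] [NormedSpace ℝ Y] [CompleteSpace Y]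
    (S : X →L[ℝ] Y) (n : ℕ) (hn : 1 ≤ n) :
    ∏ k ∈ Finset.Icc 1 n, gelfandNumber k S ≤
      (n : ℝ) ^ n * ∏ k ∈ Finset.Icc 1 n, hilbertNumber k S := by
  classical
  have hRHS0 : 0 ≤ (n : ℝ) ^ n * ∏ k ∈ Finset.Icc 1 n, hilbertNumber k S :=
    mul_nonneg (pow_nonneg (Nat.cast_nonneg n) n)
      (Finset.prod_nonneg fun k _ => hilbertNumber_nonneg k S)
  by_cases hc : ∀ k : ℕ, 1 ≤ k → k ≤ n → 0 < gelfandNumber k S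
  swap
  · push_neg at hc
    obtain ⟨k, hk1, hkn, hk0⟩ := hc
    have hzero : gelfandNumber k S = 0 := le_antisymm hk0 (gelfandNumber_nonneg k S)
    rw [Finset.prod_eq_zero (Finset.mem_Icc.mpr ⟨hk1, hkn⟩) hzero]
    exact hRHS0
  have key : ∀ ε : ℝ, 0 < ε → ε < 1 →
      (1 - ε) ^ n * ∏ k ∈ Finset.Icc 1 n, gelfandNumber k S ≤
        (n : ℝ) ^ n * ∏ k ∈ Finset.Icc 1 n, hilbertNumber k S := by
    intro ε hε0 hε1
    obtain ⟨x, f, hx, hf, htri, hdiag⟩ := pietsch_construction S n hε0 hε1 hc n le_rfl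
    obtain ⟨A, hA, hAnorm⟩ := exists_A n x hx
    obtain ⟨B, hB, hBnorm⟩ := exists_B n f hf
    obtain ⟨J, hJ, hJnorm⟩ := exists_J n
    obtain ⟨P, hP, hPnorm⟩ := exists_P n
    have hcf : ∀ i : Fin n, 0 < gelfandNumber ((i : ℕ) + 1) S := fun i =>
      hc ((i : ℕ) + 1) (Nat.le_add_left 1 _) i.2
    have hd : ∀ i : Fin n, 0 < f i (S (x i)) := fun i =>
      lt_of_lt_of_le (by nlinarith [hcf i]) (hdiag i)
    set i0 : Fin n := ⟨0, hn⟩ with hi0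
    have hAe2 : A (e2 (i0 : ℕ)) = x i0 := by
      rw [hA]
      rw [Finset.sum_eq_single i0]
      · rw [e2_apply_self, one_smul]
      · intro k _ hk
        rw [e2_apply_ne (fun h => hk (Fin.val_injective h)), zero_smul]
      · intro h; exact absurd (Finset.mem_univ i0) h
    have hAne : A ≠ 0 := by
      intro h
      have hx0 : x i0 ≠ 0 := by
        intro hxz
        have := hd i0
        rw [hxz] at this
        simp at this
      rw [h] at hAe2
      exact hx0 (by simpa using hAe2.symm)
    have hBcoord : ∀ (y : Y) (i : Fin n), (B y) (i : ℕ) = f i y := by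
      intro y i
      rw [hB, ell2_sum_apply]
      rw [Finset.sum_eq_single i]
      · rw [lp.coeFn_smul, Pi.smul_apply, e2_apply_self, smul_eq_mul, mul_one]
      · intro k _ hk
        rw [lp.coeFn_smul, Pi.smul_apply,
          e2_apply_ne (fun h => hk (Fin.val_injective h.symm)), smul_eq_mul, mul_zero]
      · intro h; exact absurd (Finset.mem_univ i) h
    have hBne : B ≠ 0 := by
      intro h
      have := hBcoord (S (x i0)) i0
      rw [h] at this
      simp only [ContinuousLinearMap.zero_apply] at this
      have h0 : f i0 (S (x i0)) = 0 := by
        rw [← this]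
        rfl
      exact absurd h0 (ne_of_gt (hd i0))
    set g : Matrix (Fin n) (Fin n) ℝ := fun i j => f i (S (x j)) with hg
    set T' := P.comp ((B.comp (S.comp A)).comp J) with hT'def
    have hAJ : ∀ v : EuclideanSpace ℝ (Fin n), A (J v) = ∑ k : Fin n, v k • x k := by
      intro v
      rw [hJ, hA]
      refine Finset.sum_congr rfl fun k _ => ?_
      congr 1
      rw [ell2_sum_apply]
      rw [Finset.sum_eq_single k]
      · rw [lp.coeFn_smul, Pi.smul_apply, e2_apply_self, smul_eq_mul, mul_one]
      · intro b _ hb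
        rw [lp.coeFn_smul, Pi.smul_apply,
          e2_apply_ne (fun h => hb (Fin.val_injective h.symm)), smul_eq_mul, mul_zero]
      · intro h; exact absurd (Finset.mem_univ k) h
    have hT' : (T' : EuclideanSpace ℝ (Fin n) →ₗ[ℝ] EuclideanSpace ℝ (Fin n)) =
        Matrix.toEuclideanLin g := by
      apply LinearMap.ext
      intro v
      have hlhs : (T' : EuclideanSpace ℝ (Fin n) →ₗ[ℝ] EuclideanSpace ℝ (Fin n)) v
          = P (B (S (A (J v)))) := rfl
      rw [hlhs]
      have : Matrix.toEuclideanLin g v = fun j => ∑ k : Fin n, g j k * v k := by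
        rw [Matrix.toEuclideanLin_apply]
        rfl
      ext j
      rw [this]
      rw [hP, hBcoord, hAJ, map_sum, map_sum]
      refine Finset.sum_congr rfl fun k _ => ?_
      rw [S.map_smul (v k) (x k), (f j).map_smul (v k) (S (x k)), smul_eq_mul, mul_comm]
    have htr : g.BlockTriangular OrderDual.toDual := by
      intro i j hij
      exact htri i j hij
    have hdet : g.det = ∏ i : Fin n, f i (S (x i)) :=
      Matrix.det_of_lowerTriangular g htr
    have h1 : ∏ k ∈ Finset.Icc 1 n, ((1 - ε) * gelfandNumber k S) ≤ |g.det| := by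
      rw [prod_Icc_one_eq_prod_fin n (fun k => (1 - ε) * gelfandNumber k S)]
      refine le_trans ?_ (le_abs_self g.det)
      rw [hdet]
      refine Finset.prod_le_prod (fun i _ => ?_) (fun i _ => hdiag i)
      nlinarith [hcf i]
    have h2 := abs_det_le_prod_approxNumber n g T' hT'
    have h3 : ∀ i : Fin n, approxNumber ((i : ℕ) + 1) T'
        ≤ approxNumber ((i : ℕ) + 1) (B.comp (S.comp A)) := fun i =>
      approxNumber_comp_le (Nat.le_add_left 1 _) (B.comp (S.comp A)) P J hPnorm hJnorm
    have hBA : ‖B‖ * ‖A‖ ≤ (n : ℝ) := by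
      calc ‖B‖ * ‖A‖ ≤ Real.sqrt n * Real.sqrt n :=
            mul_le_mul hBnorm hAnorm (norm_nonneg _) (Real.sqrt_nonneg _)
        _ = n := Real.mul_self_sqrt (Nat.cast_nonneg n)
    have h4 : ∀ i : Fin n, approxNumber ((i : ℕ) + 1) (B.comp (S.comp A))
        ≤ (n : ℝ) * hilbertNumber ((i : ℕ) + 1) S := by
      intro i
      have := approxNumber_le_hilbert_mul (n := (i : ℕ) + 1) (Nat.le_add_left 1 _) S A B hAne hBne
      refine this.trans ?_
      rw [mul_comm ((n : ℝ)) _]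
      exact mul_le_mul_of_nonneg_left hBA (hilbertNumber_nonneg _ S)
    calc (1 - ε) ^ n * ∏ k ∈ Finset.Icc 1 n, gelfandNumber k S
        = ∏ k ∈ Finset.Icc 1 n, ((1 - ε) * gelfandNumber k S) := by
          rw [Finset.prod_mul_distrib, Finset.prod_const, Nat.card_Icc]
          simp
      _ ≤ |g.det| := h1
      _ ≤ ∏ i : Fin n, approxNumber ((i : ℕ) + 1) T' := h2
      _ ≤ ∏ i : Fin n, approxNumber ((i : ℕ) + 1) (B.comp (S.comp A)) :=
          Finset.prod_le_prod (fun i _ => approxNumber_nonneg _ _) (fun i _ => h3 i)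
      _ ≤ ∏ i : Fin n, ((n : ℝ) * hilbertNumber ((i : ℕ) + 1) S) :=
          Finset.prod_le_prod (fun i _ => approxNumber_nonneg _ _) (fun i _ => h4 i)
      _ = (n : ℝ) ^ n * ∏ i : Fin n, hilbertNumber ((i : ℕ) + 1) S := by
          rw [Finset.prod_mul_distrib, Finset.prod_const, Finset.card_univ, Fintype.card_fin]
      _ = (n : ℝ) ^ n * ∏ k ∈ Finset.Icc 1 n, hilbertNumber k S := by
          rw [prod_Icc_one_eq_prod_fin n (fun k => hilbertNumber k S)]
  -- limiting argument
  have hseq : ∀ m : ℕ, (1 - 1 / ((m : ℝ) + 2)) ^ n * ∏ k ∈ Finset.Icc 1 n, gelfandNumber k S ≤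
      (n : ℝ) ^ n * ∏ k ∈ Finset.Icc 1 n, hilbertNumber k S := by
    intro m
    apply key
    · positivity
    · rw [div_lt_one (by positivity)]
      nlinarith [Nat.cast_nonneg (α := ℝ) m]
  have htend : Filter.Tendsto
      (fun m : ℕ => (1 - 1 / ((m : ℝ) + 2)) ^ n * ∏ k ∈ Finset.Icc 1 n, gelfandNumber k S)
      Filter.atTop (nhds ((1 - 0 : ℝ) ^ n * ∏ k ∈ Finset.Icc 1 n, gelfandNumber k S)) := by
    apply Filter.Tendsto.mul_const
    apply Filter.Tendsto.pow
    apply Filter.Tendsto.const_sub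
    have h2 : Filter.Tendsto (fun m : ℕ => ((m : ℝ) + 2)) Filter.atTop Filter.atTop := by
      apply Filter.tendsto_atTop_add_const_right
      exact tendsto_natCast_atTop_atTop
    simpa [Pi.inv_def] using h2.inv_tendsto_atTop
  have := le_of_tendsto' htend hseq
  simpa using this
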